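/- Let G ∈ ℝ^{N×N} be a symmetric positive semidefinite matrix with eigenvalues λ_1 ≥ λ_2 ≥ … ≥ λ_N ≥ 0 (listed with multiplicity), and let 1 ≤ p ≤ N. Then for every matrix Y ∈ ℝ^{p×N} one has ‖YᵀY − G‖_F² ≥ Σ_{i=p+1}^N λ_i², and there exists Y ∈ ℝ^{p×N} attaining equality; hence the classical MDS problem min_Y ‖YᵀY − G‖_F² has optimal value Σ_{i=p+1}^N λ_i². -/

import Mathlib

open Matrix

open Matrix Finset


lemma frob_trace {N : ℕ} (M : Matrix (Fin N) (Fin N) ℝ) :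
    ∑ i, ∑ j, M i j ^ 2 = (Mᵀ * M).trace := by
  simp only [Matrix.trace, Matrix.diag, Matrix.mul_apply, Matrix.transpose_apply, sq]
  exact Finset.sum_comm

lemma frob_conj {N : ℕ} {U : Matrix (Fin N) (Fin N) ℝ} (hU : Uᵀ * U = 1)
    (M : Matrix (Fin N) (Fin N) ℝ) :
    ∑ i, ∑ j, (Uᵀ * M * U) i j ^ 2 = ∑ i, ∑ j, M i j ^ 2 := by
  have hU' : U * Uᵀ = 1 := mul_eq_one_comm.mp hU
  rw [frob_trace, frob_trace]
  have h1 : (Uᵀ * M * U)ᵀ * (Uᵀ * M * U) = Uᵀ * (Mᵀ * M) * U := by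
    simp only [Matrix.transpose_mul, Matrix.transpose_transpose, Matrix.mul_assoc]
    rw [← Matrix.mul_assoc U Uᵀ, hU', Matrix.one_mul]
  rw [h1, Matrix.trace_mul_cycle, ← Matrix.mul_assoc, hU', Matrix.one_mul]

lemma card_tail {N p : ℕ} (hpN : p ≤ N) :
    (Finset.univ.filter (fun i : Fin N => p ≤ (i : ℕ))).card = N - p := by
  rw [Finset.card_filter]
  rw [Fin.sum_univ_eq_sum_range (fun i => if p ≤ i then 1 else 0)]
  rw [← Finset.card_filter]
  have h : (Finset.range N).filter (fun i => p ≤ i) = Finset.Ico p N := by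
    ext x; simp [Finset.mem_Ico, and_comm]
  rw [h, Nat.card_Ico]

lemma weight_bound {N p : ℕ} (h : p < N) (lam : Fin N → ℝ)
    (hsorted : ∀ i j : Fin N, i ≤ j → lam j ≤ lam i)
    (hnonneg : ∀ i, 0 ≤ lam i)
    (w : Fin N → ℝ) (hw0 : ∀ i, 0 ≤ w i) (hw1 : ∀ i, w i ≤ 1)
    (hsum : ∑ i, w i = ((N - p : ℕ) : ℝ)) :
    ∑ i ∈ Finset.univ.filter (fun i : Fin N => p ≤ (i : ℕ)), lam i ^ 2
      ≤ ∑ i, lam i ^ 2 * w i := by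
  set q : Fin N := ⟨p, h⟩ with hq
  set c : ℝ := lam q ^ 2 with hc
  set P : Fin N → Prop := fun i => p ≤ (i : ℕ) with hP
  have hc1 : ∀ i : Fin N, p ≤ (i : ℕ) → lam i ^ 2 ≤ c := by
    intro i hi
    exact pow_le_pow_left₀ (hnonneg i) (hsorted q i hi) 2
  have hc2 : ∀ i : Fin N, ¬ p ≤ (i : ℕ) → c ≤ lam i ^ 2 := by
    intro i hi
    exact pow_le_pow_left₀ (hnonneg q) (hsorted i q (show (i:ℕ) ≤ p by omega)) 2
  have hc0 : 0 ≤ c := sq_nonneg _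
  have hsplitw : ∑ i ∈ Finset.univ.filter P, w i + ∑ i ∈ Finset.univ.filter (fun i => ¬ P i), w i = ((N - p : ℕ) : ℝ) := by
    rw [Finset.sum_filter_add_sum_filter_not]; exact hsum
  have hsplit : ∑ i ∈ Finset.univ.filter P, lam i ^ 2 * w i + ∑ i ∈ Finset.univ.filter (fun i => ¬ P i), lam i ^ 2 * w i = ∑ i, lam i ^ 2 * w i :=
    Finset.sum_filter_add_sum_filter_not _ _ _
  have hcard : ((Finset.univ.filter P).card : ℝ) = ((N - p : ℕ) : ℝ) := by
    norm_cast; exact card_tail h.le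
  have hA : ∑ i ∈ Finset.univ.filter P, lam i ^ 2 * (1 - w i)
      ≤ ∑ i ∈ Finset.univ.filter P, c * (1 - w i) := by
    apply Finset.sum_le_sum
    intro i hi
    have hi' : p ≤ (i : ℕ) := (Finset.mem_filter.mp hi).2
    exact mul_le_mul_of_nonneg_right (hc1 i hi') (by linarith [hw1 i])
  have hB : ∑ i ∈ Finset.univ.filter (fun i => ¬ P i), c * w i
      ≤ ∑ i ∈ Finset.univ.filter (fun i => ¬ P i), lam i ^ 2 * w i := by
    apply Finset.sum_le_sum
    intro i hi
    exact mul_le_mul_of_nonneg_right (hc2 i (Finset.mem_filter.mp hi).2) (hw0 i)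
  have e1 : ∑ i ∈ Finset.univ.filter P, lam i ^ 2 * (1 - w i)
      = ∑ i ∈ Finset.univ.filter P, lam i ^ 2 - ∑ i ∈ Finset.univ.filter P, lam i ^ 2 * w i := by
    rw [← Finset.sum_sub_distrib]; congr 1; ext i; ring
  have e2 : ∑ i ∈ Finset.univ.filter P, c * (1 - w i)
      = c * (((Finset.univ.filter P).card : ℝ) - ∑ i ∈ Finset.univ.filter P, w i) := by
    rw [← Finset.mul_sum]; congr 1
    rw [Finset.sum_sub_distrib, Finset.sum_const, nsmul_eq_mul, mul_one]
  have e3 : c * (((Finset.univ.filter P).card : ℝ) - ∑ i ∈ Finset.univ.filter P, w i)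
      = c * ∑ i ∈ Finset.univ.filter (fun i => ¬ P i), w i := by
    congr 1; rw [hcard]; linarith
  have e4 : c * ∑ i ∈ Finset.univ.filter (fun i => ¬ P i), w i
      = ∑ i ∈ Finset.univ.filter (fun i => ¬ P i), c * w i := Finset.mul_sum _ _ _
  linarith [hA, hB, e1, e2, e3, e4, hsplit]


lemma lower_diag {N p : ℕ} (h : p < N) (lam : Fin N → ℝ)
    (hsorted : ∀ i j : Fin N, i ≤ j → lam j ≤ lam i)
    (hnonneg : ∀ i, 0 ≤ lam i)
    (Z : Matrix (Fin p) (Fin N) ℝ) :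
    ∑ i ∈ Finset.univ.filter (fun i : Fin N => p ≤ (i : ℕ)), lam i ^ 2
      ≤ ∑ i, ∑ j, (Zᵀ * Z - Matrix.diagonal lam) i j ^ 2 := by
  classical
  set f : EuclideanSpace ℝ (Fin N) →ₗ[ℝ] (Fin p → ℝ) :=
    (Matrix.mulVecLin Z).comp (WithLp.linearEquiv 2 ℝ (Fin N → ℝ)).toLinearMap with hf
  set K := LinearMap.ker f with hK
  have hd : N - p ≤ Module.finrank ℝ K := by
    have h1 := LinearMap.finrank_range_add_finrank_ker f
    have h2 : Module.finrank ℝ (LinearMap.range f) ≤ p := by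
      refine le_trans (Submodule.finrank_le _) ?_
      simp [Module.finrank_pi]
    have h3 : Module.finrank ℝ (EuclideanSpace ℝ (Fin N)) = N := finrank_euclideanSpace_fin
    rw [h3] at h1
    rw [← hK] at h1
    omega
  set b := stdOrthonormalBasis ℝ K with hb
  set v : Fin (N - p) → EuclideanSpace ℝ (Fin N) :=
    fun k => ((b (Fin.castLE hd k) : K) : EuclideanSpace ℝ (Fin N)) with hv'
  have hv : Orthonormal ℝ v := by
    have h1 : Orthonormal ℝ (fun k : Fin (N - p) => b (Fin.castLE hd k)) :=
      b.orthonormal.comp _ (Fin.castLE_injective hd)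
    exact h1.comp_linearIsometry K.subtypeₗᵢ
  have hker : ∀ k, Z.mulVec (v k) = 0 := by
    intro k
    exact LinearMap.mem_ker.mp (b (Fin.castLE hd k)).2
  set M : Matrix (Fin N) (Fin N) ℝ := Zᵀ * Z - Matrix.diagonal lam with hM
  have hMv : ∀ k, M.mulVec (v k) = fun i => -(lam i * v k i) := by
    intro k
    funext i
    rw [hM, Matrix.sub_mulVec, ← Matrix.mulVec_mulVec, hker, Matrix.mulVec_zero]
    simp [Matrix.mulVec_diagonal]
  -- inner products in EuclideanSpace
  have inner_eq : ∀ x y : EuclideanSpace ℝ (Fin N),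
      (inner ℝ x y : ℝ) = ∑ j, x j * y j := by
    intro x y
    simp [PiLp.inner_apply, RCLike.inner_apply, mul_comm]
  have bessel : ∀ x : EuclideanSpace ℝ (Fin N),
      ∑ k, (∑ j, v k j * x j) ^ 2 ≤ ∑ j, x j ^ 2 := by
    intro x
    have h1 := hv.sum_inner_products_le (s := Finset.univ) x
    have h2 : ∑ k, ‖(inner ℝ (v k) x : ℝ)‖ ^ 2 = ∑ k, (∑ j, v k j * x j) ^ 2 := by
      refine Finset.sum_congr rfl fun k _ => ?_
      rw [Real.norm_eq_abs, sq_abs, inner_eq]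
    have h3 : ‖x‖ ^ 2 = ∑ j, x j ^ 2 := by
      rw [← real_inner_self_eq_norm_sq, inner_eq]
      exact Finset.sum_congr rfl fun j _ => (sq (x j)) ▸ (sq (x j)).symm ▸ rfl
    rw [h2] at h1
    rw [h3] at h1
    exact h1
  set w : Fin N → ℝ := fun i => ∑ k, v k i ^ 2 with hw
  have hw0 : ∀ i, 0 ≤ w i := fun i => Finset.sum_nonneg fun k _ => sq_nonneg _
  have hw1 : ∀ i, w i ≤ 1 := by
    intro i
    have h1 := bessel (EuclideanSpace.single i (1 : ℝ))
    have h2 : ∀ k : Fin (N - p), ∑ j, v k j * (EuclideanSpace.single i (1:ℝ)) j = v k i := by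
      intro k
      simp [EuclideanSpace.single_apply]
    have h3 : ∑ j, ((EuclideanSpace.single i (1:ℝ)) j) ^ 2 = 1 := by
      simp [EuclideanSpace.single_apply, apply_ite (· ^ 2)]
    rw [h3] at h1
    calc w i = ∑ k, (∑ j, v k j * (EuclideanSpace.single i (1:ℝ)) j) ^ 2 := by
            refine Finset.sum_congr rfl fun k _ => ?_; rw [h2]
      _ ≤ 1 := h1
  have hnorm : ∀ k, ∑ i, v k i ^ 2 = 1 := by
    intro k
    have h1 : ‖v k‖ = 1 := hv.1 k
    have h2 : (inner ℝ (v k) (v k) : ℝ) = 1 := by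
      rw [real_inner_self_eq_norm_sq, h1]; norm_num
    rw [inner_eq] at h2
    rw [← h2]
    exact Finset.sum_congr rfl fun j _ => sq (v k j)
  have hwsum : ∑ i, w i = ((N - p : ℕ) : ℝ) := by
    rw [hw]
    rw [Finset.sum_comm]
    rw [Finset.sum_congr rfl fun k _ => hnorm k]
    simp
  -- step 2 : kernel sums
  have step2 : ∑ k, ∑ i, (M.mulVec (v k) i) ^ 2 = ∑ i, lam i ^ 2 * w i := by
    rw [Finset.sum_comm]
    refine Finset.sum_congr rfl fun i _ => ?_
    rw [hw, Finset.mul_sum]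
    refine Finset.sum_congr rfl fun k _ => ?_
    rw [hMv k]
    ring
  -- step 1 : Bessel bound
  have step1 : ∑ k, ∑ i, (M.mulVec (v k) i) ^ 2 ≤ ∑ i, ∑ j, M i j ^ 2 := by
    rw [Finset.sum_comm]
    refine Finset.sum_le_sum fun i _ => ?_
    have h1 := bessel (WithLp.toLp 2 (fun j => M i j) : EuclideanSpace ℝ (Fin N))
    calc ∑ k, (M.mulVec (v k) i) ^ 2
        = ∑ k, (∑ j, v k j * M i j) ^ 2 := by
          refine Finset.sum_congr rfl fun k _ => ?_
          congr 1
          rw [Matrix.mulVec, dotProduct]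
          exact Finset.sum_congr rfl fun j _ => mul_comm _ _
      _ ≤ ∑ j, M i j ^ 2 := h1
  have final := weight_bound h lam hsorted hnonneg w hw0 hw1 hwsum
  calc ∑ i ∈ Finset.univ.filter (fun i : Fin N => p ≤ (i : ℕ)), lam i ^ 2
      ≤ ∑ i, lam i ^ 2 * w i := final
    _ = ∑ k, ∑ i, (M.mulVec (v k) i) ^ 2 := step2.symm
    _ ≤ ∑ i, ∑ j, M i j ^ 2 := step1

lemma embed_gram {N p : ℕ} (lam : Fin N → ℝ) (hnonneg : ∀ i, 0 ≤ lam i)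
    (Z : Matrix (Fin p) (Fin N) ℝ)
    (hZ : Z = Matrix.of fun (i : Fin p) (j : Fin N) =>
      if (j : ℕ) = (i : ℕ) then Real.sqrt (lam j) else 0) :
    Zᵀ * Z = Matrix.diagonal (fun j : Fin N => if (j : ℕ) < p then lam j else 0) := by
  subst hZ
  ext j j'
  simp only [Matrix.mul_apply, Matrix.transpose_apply]
  by_cases hjj : j = j'
  · subst hjj
    by_cases hj : (j : ℕ) < p
    · rw [Finset.sum_eq_single (⟨(j : ℕ), hj⟩ : Fin p)]
      · simp [Matrix.diagonal_apply_eq, Real.mul_self_sqrt (hnonneg j), hj]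
      · intro i _ hi
        have : ¬ (j : ℕ) = (i : ℕ) := by
          intro hcon
          apply hi
          exact Fin.ext hcon.symm
        simp [this]
      · intro hcon; exact absurd (Finset.mem_univ _) hcon
    · rw [Finset.sum_eq_zero, Matrix.diagonal_apply_eq]
      · simp [hj]
      · intro i _
        have : ¬ (j : ℕ) = (i : ℕ) := by omega
        simp [this]
  · rw [Finset.sum_eq_zero, Matrix.diagonal_apply_ne _ hjj]
    intro i _
    by_cases h1 : (j : ℕ) = (i : ℕ)
    · have h2 : ¬ (j' : ℕ) = (i : ℕ) := by
        intro hcon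
        exact hjj (Fin.ext (by omega))
      simp [h2]
    · simp [h1]

/-- For a symmetric PSD matrix `G` with eigenvalues `λ₁ ≥ … ≥ λ_N ≥ 0` (listed with
multiplicity, realized by an orthogonal diagonalization) and `1 ≤ p ≤ N`, every
`Y ∈ ℝ^{p×N}` satisfies `‖YᵀY - G‖_F² ≥ ∑_{i>p} λᵢ²`, and some `Y` attains equality;
hence the classical MDS problem has optimal value `∑_{i>p} λᵢ²`. -/
theorem stmt_10 (N p : ℕ) (hp1 : 1 ≤ p) (hpN : p ≤ N)
    (G : Matrix (Fin N) (Fin N) ℝ) (hGsymm : G.IsSymm)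
    (lam : Fin N → ℝ)
    (hsorted : ∀ i j : Fin N, i ≤ j → lam j ≤ lam i)
    (hnonneg : ∀ i, 0 ≤ lam i)
    (hdiag : ∃ U : Matrix (Fin N) (Fin N) ℝ,
      Uᵀ * U = 1 ∧ G = Uᵀ * Matrix.diagonal lam * U) :
    (∀ Y : Matrix (Fin p) (Fin N) ℝ,
        ∑ i ∈ Finset.univ.filter (fun i : Fin N => p ≤ (i : ℕ)), lam i ^ 2
          ≤ ∑ i, ∑ j, (Yᵀ * Y - G) i j ^ 2) ∧
    ∃ Y : Matrix (Fin p) (Fin N) ℝ,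
        ∑ i, ∑ j, (Yᵀ * Y - G) i j ^ 2
          = ∑ i ∈ Finset.univ.filter (fun i : Fin N => p ≤ (i : ℕ)), lam i ^ 2 := by
  obtain ⟨U, hU, hG⟩ := hdiag
  have hU' : U * Uᵀ = 1 := mul_eq_one_comm.mp hU
  have key : ∀ Y : Matrix (Fin p) (Fin N) ℝ,
      Yᵀ * Y - G = Uᵀ * ((Y * Uᵀ)ᵀ * (Y * Uᵀ) - Matrix.diagonal lam) * U := by
    intro Y
    rw [hG, Matrix.mul_sub, Matrix.sub_mul]
    congr 1
    refine Eq.symm ?_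
    simp only [Matrix.transpose_mul, Matrix.transpose_transpose, Matrix.mul_assoc]
    rw [hU, Matrix.mul_one, ← Matrix.mul_assoc Uᵀ U, hU, Matrix.one_mul]
  have frob : ∀ Y : Matrix (Fin p) (Fin N) ℝ,
      ∑ i, ∑ j, (Yᵀ * Y - G) i j ^ 2
        = ∑ i, ∑ j, ((Y * Uᵀ)ᵀ * (Y * Uᵀ) - Matrix.diagonal lam) i j ^ 2 := by
    intro Y
    rw [key Y]
    exact frob_conj hU _
  constructor
  · intro Y
    rw [frob Y]
    rcases lt_or_eq_of_le hpN with h | h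
    · exact lower_diag h lam hsorted hnonneg (Y * Uᵀ)
    · have hempty : Finset.univ.filter (fun i : Fin N => p ≤ (i : ℕ)) = ∅ := by
        ext i
        simp only [Finset.mem_filter, Finset.mem_univ, true_and, Finset.notMem_empty,
          iff_false]
        have := i.isLt
        omega
      rw [hempty]
      simp only [Finset.sum_empty]
      positivity
  · set Z₀ : Matrix (Fin p) (Fin N) ℝ :=
      Matrix.of fun (i : Fin p) (j : Fin N) =>
        if (j : ℕ) = (i : ℕ) then Real.sqrt (lam j) else 0 with hZ₀
    refine ⟨Z₀ * U, ?_⟩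
    have h1 : (Z₀ * U) * Uᵀ = Z₀ := by rw [Matrix.mul_assoc, hU', Matrix.mul_one]
    rw [frob (Z₀ * U), h1, embed_gram lam hnonneg Z₀ hZ₀, Matrix.diagonal_sub]
    set ν : Fin N → ℝ := fun j => (if (j : ℕ) < p then lam j else 0) - lam j with hν
    have h2 : ∀ i : Fin N, ∑ j, (Matrix.diagonal ν) i j ^ 2 = ν i ^ 2 := by
      intro i
      rw [Finset.sum_eq_single i]
      · rw [Matrix.diagonal_apply_eq]
      · intro j _ hj
        rw [Matrix.diagonal_apply_ne ν (Ne.symm hj)]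
        ring
      · intro hcon; exact absurd (Finset.mem_univ i) hcon
    rw [Finset.sum_congr rfl fun i _ => h2 i, Finset.sum_filter]
    refine Finset.sum_congr rfl fun i _ => ?_
    by_cases hi : p ≤ (i : ℕ)
    · have hi' : ¬ (i : ℕ) < p := by omega
      simp only [hν, hi', if_false, hi, if_true]
      ring
    · have hi' : (i : ℕ) < p := by omega
      simp only [hν, hi', if_true, hi, if_false]
      ring
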